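/- arXiv:1710.05715 — 3 statements merged into one kernel-verified Lean document; each statement's English description precedes it below -/
import Mathlib

section
/- Let F be a finite nonempty universe, 𝒮 a finite family of subsets of F whose union is F, and w : 𝒮 → ℝ a positive weight function. Suppose the greedy algorithm selects sets P₁, …, P_k in order (at each step choosing a set minimizing w(P)/|P ∩ R| over sets P with P ∩ R ≠ ∅, where R is the current set of uncovered elements) until all of F is covered. Then for every subfamily C* ⊆ 𝒮 whose union is F, the total weight of the greedy selection satisfies Σ_{i=1}^{k} w(P_i) ≤ H(p) · Σ_{P ∈ C*} w(P), where p = max_{P ∈ 𝒮} |P| and H(p) = Σ_{j=1}^{p} 1/j is the p-th harmonic number. In other words, the greedy algorithm is an H(p)-approximation for weighted set cover. -/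
private lemma harm_mono_aux {a b : ℕ} (h : a ≤ b) :
    ∑ j ∈ Finset.range a, (1:ℝ)/(j+1) ≤ ∑ j ∈ Finset.range b, (1:ℝ)/(j+1) := by
  apply Finset.sum_le_sum_of_subset_of_nonneg (Finset.range_subset_range.2 h)
  intro i _ _; positivity

private lemma harm_diff_aux {a b : ℕ} (hba : b ≤ a) :
    ((a:ℝ) - b)/a ≤ (∑ j ∈ Finset.range a, (1:ℝ)/(j+1)) - ∑ j ∈ Finset.range b, (1:ℝ)/(j+1) := by
  rcases Nat.eq_zero_or_pos a with ha | ha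
  · subst ha; interval_cases b; simp
  · rw [← Finset.sum_Ico_eq_sub _ hba]
    have h1 : ((a:ℝ) - b)/a = ∑ j ∈ Finset.Ico b a, (1:ℝ)/a := by
      rw [Finset.sum_const, Nat.card_Ico, nsmul_eq_mul, Nat.cast_sub hba]
      ring
    rw [h1]
    apply Finset.sum_le_sum
    intro j hj
    have hj' : (j:ℝ)+1 ≤ a := by
      have := (Finset.mem_Ico.1 hj).2
      exact_mod_cast this
    exact one_div_le_one_div_of_le (by positivity) hj'

/-- Greedy weighted set cover is an `H(p)`-approximation, where
`p = max_{P ∈ 𝒮} |P|` and `H(p) = ∑_{j=1}^p 1/j`.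

`F` is a finite nonempty universe, `𝒮` a finite family of subsets of `F`
whose union is `F`, `w` a positive weight function on the sets of `𝒮`.
The greedy algorithm selects `P 0, …, P (k-1)` in order: `R i` is the set of
still uncovered elements (`R 0 = F`, `R (i+1) = R i \ P i`), and at each step
the chosen set minimizes `w(P)/|P ∩ R|` among sets `Q ∈ 𝒮` meeting `R`;
after the `k` steps everything is covered (`R k = ∅`).  Then for every
subfamily `C ⊆ 𝒮` whose union is `F`, the total greedy weight is at most
`H(p)` times the total weight of `C`. -/
theorem greedy_setcover_harmonic_approx
    {α : Type*} [DecidableEq α]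
    (F : Finset α) (hF : F.Nonempty)
    (𝒮 : Finset (Finset α))
    (h𝒮sub : ∀ Q ∈ 𝒮, Q ⊆ F)
    (h𝒮cov : ∀ f ∈ F, ∃ Q ∈ 𝒮, f ∈ Q)
    (w : Finset α → ℝ) (hw : ∀ Q ∈ 𝒮, 0 < w Q)
    (k : ℕ) (P : ℕ → Finset α) (R : ℕ → Finset α)
    (hP : ∀ i < k, P i ∈ 𝒮)
    (hR0 : R 0 = F)
    (hRsucc : ∀ i < k, R (i + 1) = R i \ P i)
    (hPmeets : ∀ i < k, (P i ∩ R i).Nonempty)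
    (hgreedy : ∀ i < k, ∀ Q ∈ 𝒮, (Q ∩ R i).Nonempty →
      w (P i) / ((P i ∩ R i).card : ℝ) ≤ w Q / ((Q ∩ R i).card : ℝ))
    (hdone : R k = ∅)
    (C : Finset (Finset α)) (hC : C ⊆ 𝒮)
    (hCcov : ∀ f ∈ F, ∃ Q ∈ C, f ∈ Q)
    (p : ℕ) (hp : p = 𝒮.sup Finset.card) :
    ∑ i ∈ Finset.range k, w (P i) ≤
      (∑ j ∈ Finset.range p, (1 : ℝ) / (j + 1)) * ∑ Q ∈ C, w Q := by
  classical
  set H : ℕ → ℝ := fun n => ∑ j ∈ Finset.range n, (1:ℝ)/(j+1) with hH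
  set c : ℕ → ℝ := fun i => w (P i) / ((P i ∩ R i).card : ℝ) with hc
  have hcardpos : ∀ i < k, (0:ℝ) < ((P i ∩ R i).card : ℝ) := by
    intro i hi
    exact_mod_cast Finset.card_pos.2 (hPmeets i hi)
  have hcpos : ∀ i < k, 0 < c i := fun i hi =>
    div_pos (hw _ (hP i hi)) (hcardpos i hi)
  set price : α → ℝ :=
    fun f => ∑ i ∈ Finset.range k, (if f ∈ R i \ R (i+1) then c i else 0) with hprice
  have hpricenn : ∀ f, 0 ≤ price f := by
    intro f
    apply Finset.sum_nonneg
    intro i hi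
    split
    · exact (hcpos i (Finset.mem_range.1 hi)).le
    · exact le_rfl
  have hRsubF : ∀ i, i ≤ k → R i ⊆ F := by
    intro i
    induction i with
    | zero => intro _; rw [hR0]
    | succ n ih =>
      intro h
      rw [hRsucc n (by omega)]
      exact Finset.sdiff_subset.trans (ih (by omega))
  have hRdec : ∀ i < k, R (i+1) ⊆ R i := by
    intro i hi; rw [hRsucc i hi]; exact Finset.sdiff_subset
  have hdiffeq : ∀ i < k, R i \ R (i+1) = P i ∩ R i := by
    intro i hi
    rw [hRsucc i hi]
    ext x
    simp only [Finset.mem_sdiff, Finset.mem_inter]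
    tauto
  -- (1) total price = greedy weight
  have hsum1 : ∑ f ∈ F, price f = ∑ i ∈ Finset.range k, w (P i) := by
    rw [hprice, Finset.sum_comm]
    apply Finset.sum_congr rfl
    intro i hi
    have hik := Finset.mem_range.1 hi
    rw [Finset.sum_ite_mem, Finset.inter_comm,
      Finset.inter_eq_left.2 ((hdiffeq i hik ▸ Finset.inter_subset_right).trans
        (hRsubF i hik.le)),
      Finset.sum_const, hdiffeq i hik, nsmul_eq_mul, hc]
    field_simp
  -- (4) per-set bound
  have hsum4 : ∀ Q ∈ 𝒮, ∑ f ∈ Q, price f ≤ H Q.card * w Q := by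
    intro Q hQ
    have key : ∀ i < k, ((Q ∩ (R i \ R (i+1))).card : ℝ) * c i ≤
        w Q * (H (Q ∩ R i).card - H (Q ∩ R (i+1)).card) := by
      intro i hik
      have hsub : Q ∩ R (i+1) ⊆ Q ∩ R i :=
        Finset.inter_subset_inter_left (hRdec i hik)
      have hcard : ((Q ∩ (R i \ R (i+1))).card : ℝ)
          = ((Q ∩ R i).card : ℝ) - ((Q ∩ R (i+1)).card : ℝ) := by
        have : Q ∩ (R i \ R (i+1)) = (Q ∩ R i) \ (Q ∩ R (i+1)) := by
          ext x; simp only [Finset.mem_inter, Finset.mem_sdiff]; tauto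
        rw [this, Finset.card_sdiff_of_subset hsub, Nat.cast_sub (Finset.card_le_card hsub)]
      rcases Finset.eq_empty_or_nonempty (Q ∩ R i) with he | hne
      · have he2 : Q ∩ R (i+1) = ∅ := Finset.subset_empty.1 (he ▸ hsub)
        rw [hcard, he, he2]
        simp
      · have hgr := hgreedy i hik Q hQ hne
        have hapos : (0:ℝ) < ((Q ∩ R i).card : ℝ) := by
          exact_mod_cast Finset.card_pos.2 hne
        have hdiff := harm_diff_aux (Finset.card_le_card hsub)
        calc ((Q ∩ (R i \ R (i+1))).card : ℝ) * c i
            ≤ ((Q ∩ (R i \ R (i+1))).card : ℝ) * (w Q / ((Q ∩ R i).card : ℝ)) := by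
              apply mul_le_mul_of_nonneg_left hgr (by positivity)
          _ = w Q * ((((Q ∩ R i).card : ℝ) - ((Q ∩ R (i+1)).card : ℝ)) / ((Q ∩ R i).card : ℝ)) := by
              rw [hcard]; ring
          _ ≤ w Q * (H (Q ∩ R i).card - H (Q ∩ R (i+1)).card) :=
              mul_le_mul_of_nonneg_left hdiff (hw Q hQ).le
    calc ∑ f ∈ Q, price f
        = ∑ i ∈ Finset.range k, ((Q ∩ (R i \ R (i+1))).card : ℝ) * c i := by
          rw [hprice, Finset.sum_comm]
          apply Finset.sum_congr rfl
          intro i hi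
          rw [Finset.sum_ite_mem, Finset.sum_const, nsmul_eq_mul]
      _ ≤ ∑ i ∈ Finset.range k, w Q * (H (Q ∩ R i).card - H (Q ∩ R (i+1)).card) := by
          apply Finset.sum_le_sum
          intro i hi
          exact key i (Finset.mem_range.1 hi)
      _ = w Q * (H (Q ∩ R 0).card - H (Q ∩ R k).card) := by
          rw [← Finset.mul_sum, Finset.sum_range_sub']
      _ = H Q.card * w Q := by
          rw [hR0, hdone, Finset.inter_empty,
            Finset.inter_eq_left.2 (h𝒮sub Q hQ)]
          simp [hH]
          ring
  -- choice function to distribute F over C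
  choose! ch hch1 hch2 using hCcov
  have hmaps : ∀ f ∈ F, ch f ∈ C := hch1
  calc ∑ i ∈ Finset.range k, w (P i) = ∑ f ∈ F, price f := hsum1.symm
    _ = ∑ Q ∈ C, ∑ f ∈ F.filter (fun f => ch f = Q), price f :=
        (Finset.sum_fiberwise_of_maps_to hmaps price).symm
    _ ≤ ∑ Q ∈ C, ∑ f ∈ Q, price f := by
        apply Finset.sum_le_sum
        intro Q hQ
        apply Finset.sum_le_sum_of_subset_of_nonneg
        · intro f hf
          have := Finset.mem_filter.1 hf
          exact this.2 ▸ hch2 f this.1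
        · intro f _ _; exact hpricenn f
    _ ≤ ∑ Q ∈ C, H p * w Q := by
        apply Finset.sum_le_sum
        intro Q hQ
        refine (hsum4 Q (hC hQ)).trans ?_
        have hQp : Q.card ≤ p := hp ▸ Finset.le_sup (hC hQ)
        exact mul_le_mul_of_nonneg_right (harm_mono_aux hQp) (hw Q (hC hQ)).le
    _ = (∑ j ∈ Finset.range p, (1 : ℝ) / (j + 1)) * ∑ Q ∈ C, w Q := by
        rw [← Finset.mul_sum]
end

section
/- Let the greedy algorithm select sets P₁, …, P_k covering the universe F, with prices c_f := w(P_i)/|P_i ∩ R_i| for each element f first covered at step i. Fix any set P ∈ 𝒮 with |P| = d, and list its elements f₁, …, f_d in the order in which the greedy algorithm covers them (f_i covered no later than f_j whenever i ≤ j). Then for each j, the price of f_j satisfies c_{f_j} ≤ w(P)/(d − j + 1). Consequently Σ_{f ∈ P} c_f ≤ Σ_{j=1}^{d} w(P)/(d − j + 1) = H(d) · w(P). -/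
/-- Price bound inside a single set for greedy weighted set cover.
The greedy algorithm selects `P 0, …, P (k-1)` (uncovered sets `R 0 = F`,
`R (i+1) = R i \ P i`, `R k = ∅`).  Each element `f ∈ F` is first covered at
step `step f` (so `f ∈ P (step f) ∩ R (step f)`) and is assigned the price
`c f = w (P (step f)) / |P (step f) ∩ R (step f)|`.  Fix `P₀ ∈ 𝒮` with
`|P₀| = d`, and list its elements `fl 0, …, fl (d-1)` in the order in which
greedy covers them.  Then the price of the `j`-th element (0-indexed, so the
1-indexed bound `w(P₀)/(d - j + 1)` becomes `w(P₀)/(d - j)`) satisfies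
`c (fl j) ≤ w P₀ / (d - j)`, and consequently
`∑_{f ∈ P₀} c f ≤ H(d) · w(P₀)` with `H(d) = ∑_{j=1}^d 1/j`. -/
theorem greedy_setcover_price_bound_in_set
    {α : Type*} [DecidableEq α]
    (F : Finset α) (hF : F.Nonempty)
    (𝒮 : Finset (Finset α))
    (h𝒮sub : ∀ Q ∈ 𝒮, Q ⊆ F)
    (h𝒮cov : ∀ f ∈ F, ∃ Q ∈ 𝒮, f ∈ Q)
    (w : Finset α → ℝ) (hw : ∀ Q ∈ 𝒮, 0 < w Q)
    (k : ℕ) (P : ℕ → Finset α) (R : ℕ → Finset α)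
    (hP : ∀ i < k, P i ∈ 𝒮)
    (hR0 : R 0 = F)
    (hRsucc : ∀ i < k, R (i + 1) = R i \ P i)
    (hPmeets : ∀ i < k, (P i ∩ R i).Nonempty)
    (hgreedy : ∀ i < k, ∀ Q ∈ 𝒮, (Q ∩ R i).Nonempty →
      w (P i) / ((P i ∩ R i).card : ℝ) ≤ w Q / ((Q ∩ R i).card : ℝ))
    (hdone : R k = ∅)
    (step : α → ℕ)
    (hstep : ∀ f ∈ F, step f < k ∧ f ∈ P (step f) ∧ f ∈ R (step f))
    (c : α → ℝ)
    (hc : ∀ f ∈ F,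
      c f = w (P (step f)) / ((P (step f) ∩ R (step f)).card : ℝ))
    (P₀ : Finset α) (hP₀ : P₀ ∈ 𝒮)
    (d : ℕ) (hd : P₀.card = d)
    (fl : Fin d → α)
    (hfl_mem : ∀ j, fl j ∈ P₀)
    (hfl_inj : Function.Injective fl)
    (hfl_mono : ∀ i j : Fin d, i ≤ j → step (fl i) ≤ step (fl j)) :
    (∀ j : Fin d, c (fl j) ≤ w P₀ / ((d - (j : ℕ) : ℕ) : ℝ)) ∧
      ∑ f ∈ P₀, c f ≤ (∑ j ∈ Finset.range d, (1 : ℝ) / (j + 1)) * w P₀ := by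
  -- R is antitone up to k
  have hRanti : ∀ m n : ℕ, m ≤ n → n ≤ k → R n ⊆ R m := by
    intro m n hmn hnk
    induction n with
    | zero => simp [Nat.le_zero.mp hmn]
    | succ n ih =>
      rcases Nat.eq_or_lt_of_le hmn with h | h
      · simp [h]
      · have hn : n < k := Nat.lt_of_succ_le hnk
        rw [hRsucc n hn]
        exact (Finset.sdiff_subset).trans (ih (Nat.lt_succ_iff.mp h) hn.le)
  have hmem_bound : ∀ j : Fin d, c (fl j) ≤ w P₀ / ((d - (j : ℕ) : ℕ) : ℝ) := by
    intro j
    have hfF : fl j ∈ F := h𝒮sub P₀ hP₀ (hfl_mem j)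
    obtain ⟨hlt, hmemP, hmemR⟩ := hstep (fl j) hfF
    set i := step (fl j) with hi
    have hsub : (Finset.univ.filter (fun t : Fin d => j ≤ t)).image fl ⊆ P₀ ∩ R i := by
      intro x hx
      simp only [Finset.mem_image, Finset.mem_filter, Finset.mem_univ, true_and] at hx
      obtain ⟨t, hjt, rfl⟩ := hx
      refine Finset.mem_inter.mpr ⟨hfl_mem t, ?_⟩
      have hftF : fl t ∈ F := h𝒮sub P₀ hP₀ (hfl_mem t)
      obtain ⟨hlt', _, hmemR'⟩ := hstep (fl t) hftF
      exact hRanti i (step (fl t)) (hfl_mono j t hjt) hlt'.le hmemR'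
    have hcardfilter : (Finset.univ.filter (fun t : Fin d => j ≤ t)).card = d - (j : ℕ) := by
      have : Finset.univ.filter (fun t : Fin d => j ≤ t) = Finset.Ici j := by
        ext t; simp
      rw [this, Fin.card_Ici]
    have hcard : (d - (j : ℕ) : ℕ) ≤ (P₀ ∩ R i).card := by
      calc (d - (j : ℕ) : ℕ)
          = ((Finset.univ.filter (fun t : Fin d => j ≤ t)).image fl).card := by
            rw [Finset.card_image_of_injective _ hfl_inj, hcardfilter]
        _ ≤ (P₀ ∩ R i).card := Finset.card_le_card hsub
    have hne : (P₀ ∩ R i).Nonempty := ⟨fl j, Finset.mem_inter.mpr ⟨hfl_mem j, hmemR⟩⟩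
    have hg := hgreedy i hlt P₀ hP₀ hne
    have hcpos : (0:ℝ) < ((d - (j:ℕ) : ℕ) : ℝ) := by
      have : 0 < d - (j:ℕ) := Nat.sub_pos_of_lt j.isLt
      exact_mod_cast this
    have h2 : w P₀ / ((P₀ ∩ R i).card : ℝ) ≤ w P₀ / ((d - (j:ℕ) : ℕ) : ℝ) := by
      apply div_le_div_of_nonneg_left (le_of_lt (hw P₀ hP₀)) hcpos
      exact_mod_cast hcard
    rw [hc (fl j) hfF]
    exact le_trans hg h2
  refine ⟨hmem_bound, ?_⟩
  have himg : Finset.univ.image fl = P₀ := by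
    apply Finset.eq_of_subset_of_card_le
    · intro x hx
      simp only [Finset.mem_image, Finset.mem_univ, true_and] at hx
      obtain ⟨t, rfl⟩ := hx
      exact hfl_mem t
    · rw [Finset.card_image_of_injective _ hfl_inj, hd, Finset.card_univ, Fintype.card_fin]
  have hsum1 : ∑ f ∈ P₀, c f = ∑ j : Fin d, c (fl j) := by
    rw [← himg, Finset.sum_image (fun a _ b _ h => hfl_inj h)]
  rw [hsum1]
  have hsum2 : ∑ j : Fin d, c (fl j) ≤ ∑ j : Fin d, w P₀ / ((d - (j : ℕ) : ℕ) : ℝ) :=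
    Finset.sum_le_sum fun j _ => hmem_bound j
  refine hsum2.trans (le_of_eq ?_)
  calc ∑ j : Fin d, w P₀ / ((d - (j : ℕ) : ℕ) : ℝ)
      = ∑ j ∈ Finset.range d, w P₀ / ((d - j : ℕ) : ℝ) :=
        Fin.sum_univ_eq_sum_range (fun j => w P₀ / ((d - j : ℕ) : ℝ)) d
    _ = ∑ j ∈ Finset.range d, (1:ℝ) / ((d - 1 - j : ℕ) + 1) * w P₀ := by
        apply Finset.sum_congr rfl
        intro j hj
        have hjd : j < d := Finset.mem_range.mp hj
        have h1 : ((d - 1 - j : ℕ) : ℝ) + 1 = ((d - j : ℕ) : ℝ) := by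
          have h2 : d - 1 - j + 1 = d - j := by omega
          exact_mod_cast h2
        rw [h1, one_div, mul_comm, div_eq_mul_inv]
    _ = ∑ j ∈ Finset.range d, (1:ℝ) / (j + 1) * w P₀ :=
        Finset.sum_range_reflect (fun j => (1:ℝ) / (j + 1) * w P₀) d
    _ = (∑ j ∈ Finset.range d, (1 : ℝ) / (j + 1)) * w P₀ := by rw [Finset.sum_mul]
end

section
/- Suppose the greedy algorithm selects sets P₁, …, P_k covering the finite universe F, and the element prices c_f (f ∈ F) are nonnegative reals satisfying both (i) Σ_{i=1}^{k} w(P_i) = Σ_{f ∈ F} c_f, and (ii) Σ_{f ∈ P} c_f ≤ H(p) · w(P) for every P ∈ 𝒮, where p = max_{P ∈ 𝒮} |P|. Then for every subfamily C* ⊆ 𝒮 covering F, Σ_{P ∈ C*} w(P) ≥ (1/H(p)) · Σ_{i=1}^{k} w(P_i). -/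

lemma sum_biUnion_le_aux {α : Type*} [DecidableEq α] (c : α → ℝ)
    (C : Finset (Finset α)) (h : ∀ x ∈ C.biUnion id, 0 ≤ c x) :
    ∑ x ∈ C.biUnion id, c x ≤ ∑ Q ∈ C, ∑ x ∈ Q, c x := by
  induction C using Finset.induction_on with
  | empty => simp
  | @insert Q s hQ ih =>
    rw [Finset.biUnion_insert, Finset.sum_insert hQ]
    have h1 : ∀ x ∈ s.biUnion id, 0 ≤ c x := fun x hx =>
      h x (by rw [Finset.biUnion_insert]; exact Finset.mem_union_right _ hx)
    have h2 : ∑ x ∈ (Q : Finset α) ∪ s.biUnion id, c x ≤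
        ∑ x ∈ (Q : Finset α), c x + ∑ x ∈ s.biUnion id, c x := by
      have := Finset.sum_union_inter (s₁ := (Q : Finset α)) (s₂ := s.biUnion id) (f := c)
      have hnn : 0 ≤ ∑ x ∈ (Q : Finset α) ∩ s.biUnion id, c x :=
        Finset.sum_nonneg fun x hx => h x (by
          rw [Finset.biUnion_insert]
          exact Finset.mem_union_left _ (Finset.mem_of_mem_inter_left hx))
      linarith
    exact h2.trans (by linarith [ih h1])

/-- Combining the two key facts of the greedy set cover analysis:
suppose the greedy algorithm selects sets `P 0, …, P (k-1)` from `𝒮` covering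
the finite universe `F`, and the element prices `c f` are nonnegative reals
satisfying (i) `∑_{i<k} w (P i) = ∑_{f ∈ F} c f` and
(ii) `∑_{f ∈ Q} c f ≤ H(p) · w Q` for every `Q ∈ 𝒮`, where
`p = max_{Q ∈ 𝒮} |Q|` and `H(p) = ∑_{j=1}^p 1/j`.  Then for every subfamily
`C ⊆ 𝒮` covering `F`,
`∑_{Q ∈ C} w Q ≥ (1/H(p)) · ∑_{i<k} w (P i)`. -/
theorem greedy_setcover_optimal_lower_bound
    {α : Type*} [DecidableEq α]
    (F : Finset α) (hF : F.Nonempty)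
    (𝒮 : Finset (Finset α))
    (h𝒮sub : ∀ Q ∈ 𝒮, Q ⊆ F)
    (h𝒮cov : ∀ f ∈ F, ∃ Q ∈ 𝒮, f ∈ Q)
    (w : Finset α → ℝ) (hw : ∀ Q ∈ 𝒮, 0 < w Q)
    (k : ℕ) (P : ℕ → Finset α)
    (hP : ∀ i < k, P i ∈ 𝒮)
    (hPcov : ∀ f ∈ F, ∃ i < k, f ∈ P i)
    (p : ℕ) (hp : p = 𝒮.sup Finset.card)
    (c : α → ℝ) (hc : ∀ f ∈ F, 0 ≤ c f)
    (hi : ∑ i ∈ Finset.range k, w (P i) = ∑ f ∈ F, c f)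
    (hii : ∀ Q ∈ 𝒮,
      ∑ f ∈ Q, c f ≤ (∑ j ∈ Finset.range p, (1 : ℝ) / (j + 1)) * w Q)
    (C : Finset (Finset α)) (hC : C ⊆ 𝒮)
    (hCcov : ∀ f ∈ F, ∃ Q ∈ C, f ∈ Q) :
    ∑ Q ∈ C, w Q ≥
      (1 / ∑ j ∈ Finset.range p, (1 : ℝ) / (j + 1)) *
        ∑ i ∈ Finset.range k, w (P i) := by
  set H : ℝ := ∑ j ∈ Finset.range p, (1 : ℝ) / (j + 1) with hH
  -- p ≥ 1
  obtain ⟨f, hf⟩ := hF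
  obtain ⟨Q0, hQ0, hfQ0⟩ := h𝒮cov f hf
  have hp1 : 1 ≤ p := by
    rw [hp]
    calc 1 ≤ Q0.card := Finset.card_pos.mpr ⟨f, hfQ0⟩
    _ ≤ 𝒮.sup Finset.card := Finset.le_sup hQ0
  have hHpos : 0 < H := by
    rw [hH]
    apply Finset.sum_pos
    · intro j hj; positivity
    · exact Finset.nonempty_range_iff.mpr (by omega)
  -- F ⊆ biUnion
  have hsub : F ⊆ C.biUnion id := by
    intro x hx
    obtain ⟨Q, hQ, hxQ⟩ := hCcov x hx
    exact Finset.mem_biUnion.mpr ⟨Q, hQ, hxQ⟩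
  have step1 : ∑ f ∈ F, c f ≤ ∑ Q ∈ C, ∑ f ∈ Q, c f := by
    calc ∑ f ∈ F, c f ≤ ∑ f ∈ C.biUnion id, c f := by
          apply Finset.sum_le_sum_of_subset_of_nonneg hsub
          intro x hx _
          exact hc x (by
            obtain ⟨Q, hQ, hxQ⟩ := Finset.mem_biUnion.mp hx
            exact h𝒮sub Q (hC hQ) hxQ)
      _ ≤ ∑ Q ∈ C, ∑ f ∈ Q, c f := by
          apply sum_biUnion_le_aux
          intro x hx
          obtain ⟨Q, hQ, hxQ⟩ := Finset.mem_biUnion.mp hx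
          exact hc x (h𝒮sub Q (hC hQ) hxQ)
  have step2 : ∑ Q ∈ C, ∑ f ∈ Q, c f ≤ H * ∑ Q ∈ C, w Q := by
    rw [Finset.mul_sum]
    exact Finset.sum_le_sum fun Q hQ => hii Q (hC hQ)
  have key : ∑ i ∈ Finset.range k, w (P i) ≤ H * ∑ Q ∈ C, w Q := by
    rw [hi]; exact step1.trans step2
  rw [ge_iff_le, one_div, inv_mul_le_iff₀ hHpos]
  linarith [key]
end
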